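/- Let H be a separable Hilbert space, V ⊂ H a finite-dimensional subspace with orthogonal projection P_V, α ≥ 0, and A a densely defined self-adjoint positive definite operator with compact inverse. Suppose G ∈ Σ⁺(H) maps V into V and satisfies ‖G^{1/2} P_V v‖ ≥ c ‖A^{−α/2} P_V v‖ for all v ∈ H and some c > 0. Then the restriction G|_V : V → V is invertible and ‖A^{−α/2} G|_V^{−1} P_V A^{−α/2}‖_{L(H)} ≤ C for a constant C depending only on c. -/

import Mathlib

open scoped RealInnerProductSpace

/-- Uniform bound on `A^{-α/2} G|_V^{-1} P_V A^{-α/2}`: there is a constant `C`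
depending only on `c` (the operators `Aα = A^{-α/2}` and `c` are fixed, `V`, `G` vary)
such that whenever `G ∈ Σ⁺(H)` maps the finite-dimensional subspace `V` into itself and
its square root `R = G^{1/2}` satisfies `‖G^{1/2} P_V v‖ ≥ c ‖A^{-α/2} P_V v‖` for all
`v`, the restriction `G|_V` is invertible (with inverse `B`) and
`‖A^{-α/2} G|_V^{-1} P_V A^{-α/2}‖ ≤ C`. -/
theorem stmt_16
    {H : Type*} [NormedAddCommGroup H] [InnerProductSpace ℝ H] [CompleteSpace H]
    (Aα : H →L[ℝ] H) (c : ℝ) (hc : 0 < c)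
    (hAsa : IsSelfAdjoint Aα) (hApos : ∀ x : H, 0 ≤ ⟪Aα x, x⟫)
    (hAinj : Function.Injective Aα) :
    ∃ C : ℝ, ∀ (V : Submodule ℝ H) [FiniteDimensional ℝ V],
      ∀ G R : H →L[ℝ] H,
      IsSelfAdjoint G → (∀ x : H, 0 ≤ ⟪G x, x⟫) →
      IsSelfAdjoint R → (∀ x : H, 0 ≤ ⟪R x, x⟫) → (∀ x : H, R (R x) = G x) →
      (∀ v ∈ V, G v ∈ V) →
      (∀ v : H, c * ‖Aα (V.orthogonalProjection v : H)‖
        ≤ ‖R (V.orthogonalProjection v : H)‖) →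
      ∃ B : V →L[ℝ] V,
        (∀ v : V, B (V.orthogonalProjection (G v)) = v) ∧
        (∀ v : V, G (B v : H) = (v : H)) ∧
        (∀ x : H, ‖Aα ((B (V.orthogonalProjection (Aα x)) : V) : H)‖ ≤ C * ‖x‖) := by
  refine ⟨1 / c ^ 2, fun V _ G R hGsa hGpos hRsa hRpos hRR hGV hlow => ?_⟩
  -- key estimate valid for v ∈ V
  have hkey : ∀ v : H, v ∈ V → c * ‖Aα v‖ ≤ ‖R v‖ := by
    intro v hv
    have := hlow v
    have hP : (V.orthogonalProjection v : H) = v := Submodule.starProjection_eq_self_iff.2 hv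
    rwa [hP] at this
  have hGnorm : ∀ v : H, ⟪G v, v⟫ = ‖R v‖ ^ 2 := by
    intro v
    rw [← hRR v, ← real_inner_self_eq_norm_sq]
    exact hRsa.isSymmetric (R v) v
  -- the restricted map
  let g : V →ₗ[ℝ] V :=
    { toFun := fun v => ⟨G v, hGV v v.2⟩
      map_add' := by intro a b; ext; simp
      map_smul' := by intro a b; ext; simp }
  have hginj : Function.Injective g := by
    intro v w hvw
    have h0 : G ((v : H) - w) = 0 := by
      have : (G (v : H) : H) = G (w : H) := congrArg Subtype.val hvw
      simp [map_sub, this]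
    have hR0 : R ((v : H) - w) = 0 := by
      have h1 : ‖R ((v : H) - w)‖ ^ 2 = 0 := by rw [← hGnorm]; simp [h0]
      have := pow_eq_zero_iff (n := 2) (by norm_num) |>.1 h1
      exact norm_eq_zero.1 this
    have hmem : (v : H) - w ∈ V := sub_mem v.2 w.2
    have hA0 : Aα ((v : H) - w) = 0 := by
      have := hkey _ hmem
      rw [hR0, norm_zero] at this
      have : ‖Aα ((v : H) - w)‖ ≤ 0 := by
        nlinarith [norm_nonneg (Aα ((v : H) - w))]
      exact norm_eq_zero.1 (le_antisymm this (norm_nonneg _))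
    have : (v : H) - w = 0 := by
      apply hAinj; simpa using hA0
    exact Subtype.ext (sub_eq_zero.1 this)
  have hgsurj : Function.Surjective g :=
    (LinearMap.injective_iff_surjective).1 hginj
  let e : V ≃ₗ[ℝ] V := LinearEquiv.ofBijective g ⟨hginj, hgsurj⟩
  let B : V →L[ℝ] V := LinearMap.toContinuousLinearMap e.symm.toLinearMap
  have hBg : ∀ v : V, B (g v) = v := fun v => e.symm_apply_apply v
  have hgB : ∀ v : V, g (B v) = v := fun v => e.apply_symm_apply v
  have hGB : ∀ v : V, G ((B v : V) : H) = (v : H) := fun v =>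
    congrArg Subtype.val (hgB v)
  refine ⟨B, ?_, hGB, ?_⟩
  · intro v
    have hPG : V.orthogonalProjection (G (v : H)) = g v :=
      Subtype.ext (Submodule.starProjection_eq_self_iff.2 (hGV _ v.2))
    rw [hPG]; exact hBg v
  · intro x
    set w : V := B (V.orthogonalProjection (Aα x)) with hw
    have hGw : G (w : H) = (V.orthogonalProjection (Aα x) : H) := hGB _
    -- c² ‖Aα w‖² ≤ ‖R w‖² = ⟪G w, w⟫ = ⟪Aα x, w⟫ = ⟪x, Aα w⟫ ≤ ‖x‖ ‖Aα w‖
    have h1 : (c * ‖Aα (w : H)‖) ^ 2 ≤ ‖R (w : H)‖ ^ 2 := by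
      have := hkey (w : H) w.2
      have hnn : 0 ≤ c * ‖Aα (w : H)‖ := by positivity
      nlinarith [norm_nonneg (R (w : H))]
    have h2 : ‖R (w : H)‖ ^ 2 = ⟪x, Aα (w : H)⟫ := by
      rw [← hGnorm, hGw]
      calc ⟪(V.orthogonalProjection (Aα x) : H), (w : H)⟫
          = ⟪Aα x, (V.orthogonalProjection (w : H) : H)⟫ :=
            Submodule.inner_starProjection_left_eq_right V _ _
        _ = ⟪Aα x, (w : H)⟫ := by
            rw [show (V.orthogonalProjection (w : H) : H) = w from Submodule.starProjection_eq_self_iff.2 w.2]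
        _ = ⟪x, Aα (w : H)⟫ := hAsa.isSymmetric x (w : H)
    have h3 : ⟪x, Aα (w : H)⟫ ≤ ‖x‖ * ‖Aα (w : H)‖ := real_inner_le_norm _ _
    rcases eq_or_ne (‖Aα (w : H)‖) 0 with h0 | h0
    · rw [h0]; positivity
    · have hpos : 0 < ‖Aα (w : H)‖ := lt_of_le_of_ne (norm_nonneg _) (Ne.symm h0)
      have : c ^ 2 * ‖Aα (w : H)‖ ≤ ‖x‖ := by
        have := h1.trans (h2.le.trans h3)
        nlinarith
      rw [div_mul_eq_mul_div, one_mul, le_div_iff₀ (by positivity)]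
      nlinarith
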